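/- Let n be a positive integer, γ > 0, λ ∈ [0,1], ε̃ > 0 be real numbers, and set δ := max(0, 1 − λ + λγ(1 − e^{ε̃})). Let a, b be real numbers with b ≥ γ and |a − b| ≤ 2/n. Then 1 − λ + λa ≤ e^{ε̃} · (1 + 2/(nγ)) · λb + δ. -/

import Mathlib

/-- Key case of the A_i vs B_i comparison lemma in the privacy proof of the
Cluster-DP mechanism. -/
theorem cluster_dp_Ai_Bi_key_case
    (n : ℕ) (hn : 0 < n) (γ lam εt : ℝ) (hγ : 0 < γ)
    (hlam : lam ∈ Set.Icc (0:ℝ) 1) (hεt : 0 < εt)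
    (δ : ℝ) (hδ : δ = max 0 (1 - lam + lam * γ * (1 - Real.exp εt)))
    (a b : ℝ) (hb : γ ≤ b) (hab : |a - b| ≤ 2 / (n : ℝ)) :
    1 - lam + lam * a ≤ Real.exp εt * (1 + 2 / ((n : ℝ) * γ)) * (lam * b) + δ := by
  obtain ⟨hl0, hl1⟩ := hlam
  have hn' : (0:ℝ) < n := Nat.cast_pos.mpr hn
  have he : 1 ≤ Real.exp εt := Real.one_le_exp hεt.le
  have ha : a ≤ b + 2 / n := by
    have := (abs_le.mp hab).2; linarith
  set d : ℝ := 2 / ((n : ℝ) * γ) with hd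
  have hd0 : 0 ≤ d := by positivity
  have hc : 2 / (n : ℝ) = d * γ := by
    rw [hd, div_mul_eq_mul_div, mul_div_mul_right _ _ hγ.ne']
  have hδ' : 1 - lam + lam * γ * (1 - Real.exp εt) ≤ δ := hδ ▸ le_max_right _ _
  have h1 : 0 ≤ (Real.exp εt - 1) * (lam * (b - γ)) := by
    have : 0 ≤ lam * (b - γ) := mul_nonneg hl0 (by linarith)
    exact mul_nonneg (by linarith) this
  have h2 : 0 ≤ d * (lam * (Real.exp εt * b - γ)) := by
    have : γ ≤ Real.exp εt * b := by nlinarith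
    exact mul_nonneg hd0 (mul_nonneg hl0 (by linarith))
  nlinarith [mul_le_mul_of_nonneg_left ha hl0]
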